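/- Let A be a set and let a, b : A → A → A be conservative binary operations. Define c : A → A → A by c x y = a (b x y) (b y x). Then c is conservative, Com(c) = Com(a) ∪ Com(b), and moreover for every two-element subset B ∈ Com(b), the restriction of c to B equals the restriction of b to B. -/
import Mathlib


/-- A binary operation is conservative if it always returns one of its
arguments. -/
def Conservative2 {A : Type*} (f : A → A → A) : Prop :=
  ∀ x y : A, f x y = x ∨ f x y = y

/-- `Com f` is the set of two-element subsets `{a, b}` of `A` on which `f` is
commutative. -/
def Com {A : Type*} (f : A → A → A) : Set (Set A) :=
  {B | ∃ a b : A, a ≠ b ∧ B = ({a, b} : Set A) ∧ f a b = f b a}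

/-- For conservative binary operations `a, b`, the superposition
`c x y = a (b x y) (b y x)` is conservative, `Com c = Com a ∪ Com b`, and `c`
agrees with `b` on every two-element set in `Com b`. -/
theorem com_superposition {A : Type*} (a b : A → A → A)
    (ha : Conservative2 a) (hb : Conservative2 b)
    (c : A → A → A) (hc : c = fun x y => a (b x y) (b y x)) :
    Conservative2 c ∧ Com c = Com a ∪ Com b ∧
    ∀ B ∈ Com b, ∀ x ∈ B, ∀ y ∈ B, c x y = b x y := by
  subst hc
  have hdiag : ∀ (f : A → A → A), Conservative2 f → ∀ u, f u u = u := by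
    intro f hf u; rcases hf u u with h | h <;> exact h
  have key : ∀ u v, b u v = b v u → a (b u v) (b v u) = b u v := by
    intro u v h; rw [← h]; exact hdiag a ha _
  refine ⟨?_, ?_, ?_⟩
  · intro x y
    rcases hb x y with h1 | h1 <;> rcases hb y x with h2 | h2 <;>
      rcases ha (b x y) (b y x) with h3 | h3 <;> simp_all
  · ext B
    constructor
    · rintro ⟨x, y, hxy, rfl, hcomm⟩
      simp only at hcomm
      rcases hb x y with h1 | h1 <;> rcases hb y x with h2 | h2
      · left; rw [h1, h2] at hcomm; exact ⟨x, y, hxy, rfl, hcomm⟩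
      · right; exact ⟨x, y, hxy, rfl, h1.trans h2.symm⟩
      · right; exact ⟨x, y, hxy, rfl, h1.trans h2.symm⟩
      · left; rw [h1, h2] at hcomm; exact ⟨x, y, hxy, rfl, hcomm.symm⟩
    · rintro (⟨x, y, hxy, rfl, hcomm⟩ | ⟨x, y, hxy, rfl, hcomm⟩)
      · refine ⟨x, y, hxy, rfl, ?_⟩
        simp only
        rcases hb x y with h1 | h1 <;> rcases hb y x with h2 | h2
        · rw [h1, h2, hcomm]
        · rw [key x y (h1.trans h2.symm), key y x (h2.trans h1.symm), h1, h2]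
        · rw [key x y (h1.trans h2.symm), key y x (h2.trans h1.symm), h1, h2]
        · rw [h1, h2]; exact hcomm.symm
      · refine ⟨x, y, hxy, rfl, ?_⟩
        simp only
        rw [key x y hcomm, key y x hcomm.symm, hcomm]
  · rintro B ⟨x, y, hxy, rfl, hcomm⟩ u hu v hv
    simp only
    simp only [Set.mem_insert_iff, Set.mem_singleton_iff] at hu hv
    rcases hu with rfl | rfl <;> rcases hv with rfl | rfl
    · exact key _ _ rfl
    · exact key _ _ hcomm
    · exact key _ _ hcomm.symm
    · exact key _ _ rfl
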